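/- arXiv:2603.02824 — 2 statements merged into one kernel-verified Lean document; each statement's English description precedes it below -/
import Mathlib

section
/- Let H be a graph on n vertices with no odd cycle (i.e., H is bipartite), and let G = W(H) be its whisker graph. Then for every q with 1 ≤ q ≤ ν(G), the complex MF^q(G) is pure: all facets (maximal faces) have the same cardinality (namely n + q − 1). -/
variable {V : Type*}

/-- `M` is a set of pairwise disjoint edges of `G` with all endpoints in `F`. -/
def IsMatchingOn (G : SimpleGraph V) (F : Finset V) (M : Finset (Sym2 V)) : Prop :=
  (∀ e ∈ M, e ∈ G.edgeSet) ∧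
  (∀ e ∈ M, ∀ v ∈ e, v ∈ F) ∧
  (∀ e ∈ M, ∀ e' ∈ M, e ≠ e' → ∀ v ∈ e, v ∉ e')

/-- `F` is a face of the `q`-matching-free complex `MF^q(G)`. -/
def MFFace (G : SimpleGraph V) (q : ℕ) (F : Finset V) : Prop :=
  ¬ ∃ M : Finset (Sym2 V), IsMatchingOn G F M ∧ M.card = q

/-- `F` is a facet (maximal face) of the complex with face predicate `faces`. -/
def IsFacet (faces : Finset V → Prop) (F : Finset V) : Prop :=
  faces F ∧ ∀ F', faces F' → F ⊆ F' → F = F'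

/-- Even-connection of `u` and `v` with respect to the pairwise disjoint edges in `M`. -/
def EvenConnected (G : SimpleGraph V) (M : Finset (Sym2 V)) (u v : V) : Prop :=
  ∃ (r : ℕ) (p : ℕ → V), 1 ≤ r ∧ p 0 = u ∧ p (2 * r + 1) = v ∧
    (∀ k, k ≤ 2 * r → G.Adj (p k) (p (k + 1))) ∧
    (∀ k, k < r → s(p (2 * k + 1), p (2 * k + 2)) ∈ M) ∧
    (∀ k l, k < r → l < r →
      s(p (2 * k + 1), p (2 * k + 2)) = s(p (2 * l + 1), p (2 * l + 2)) → k = l)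

/-- The set of vertices covered by the edges in `M`. -/
def mSupp (M : Finset (Sym2 V)) : Set V := {v | ∃ e ∈ M, v ∈ e}

/-- The even-connection graph `G^{e₁⋯e_q}` (vertices covered by `M` are isolated). -/
def evenConnGraph (G : SimpleGraph V) (M : Finset (Sym2 V)) : SimpleGraph V where
  Adj x y := x ≠ y ∧ x ∉ mSupp M ∧ y ∉ mSupp M ∧
    (G.Adj x y ∨ EvenConnected G M x y ∨ EvenConnected G M y x)
  symm := by
    constructor
    rintro x y ⟨hne, hx, hy, h⟩
    refine ⟨hne.symm, hy, hx, ?_⟩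
    rcases h with h | h | h
    · exact Or.inl h.symm
    · exact Or.inr (Or.inr h)
    · exact Or.inr (Or.inl h)
  loopless := ⟨fun x h => h.1 rfl⟩

/-- Delete a set of vertices from a graph (keeping them as isolated vertices). -/
def delSet (G : SimpleGraph V) (S : Set V) : SimpleGraph V where
  Adj x y := G.Adj x y ∧ x ∉ S ∧ y ∉ S
  symm := ⟨fun x y ⟨h, hx, hy⟩ => ⟨h.symm, hy, hx⟩⟩
  loopless := ⟨fun x ⟨h, _, _⟩ => G.irrefl h⟩

/-- The whisker graph `W(H)`: each vertex `x` (as `Sum.inl x`) gets a pendant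
whisker vertex `Sum.inr x`. -/
def whisker (H : SimpleGraph V) : SimpleGraph (V ⊕ V) where
  Adj x y :=
    (∃ a b, x = Sum.inl a ∧ y = Sum.inl b ∧ H.Adj a b) ∨
    (∃ a, (x = Sum.inl a ∧ y = Sum.inr a) ∨ (x = Sum.inr a ∧ y = Sum.inl a))
  symm := by
    constructor
    rintro x y (⟨a, b, hx, hy, hab⟩ | ⟨a, h | h⟩)
    · exact Or.inl ⟨b, a, hy, hx, hab.symm⟩
    · exact Or.inr ⟨a, Or.inr ⟨h.2, h.1⟩⟩
    · exact Or.inr ⟨a, Or.inl ⟨h.2, h.1⟩⟩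
  loopless := by
    constructor
    rintro x (⟨a, b, hx, hy, hab⟩ | ⟨a, ⟨h1, h2⟩ | ⟨h1, h2⟩⟩)
    · obtain rfl := Sum.inl_injective (hx ▸ hy : (Sum.inl a : V ⊕ V) = Sum.inl b)
      exact H.irrefl hab
    · exact Sum.inl_ne_inr (h1 ▸ h2 : (Sum.inl a : V ⊕ V) = Sum.inr a)
    · exact Sum.inr_ne_inl (h1 ▸ h2 : (Sum.inr a : V ⊕ V) = Sum.inl a)

/-- Shellability of the complex with face predicate `faces`: there is a linear
order `F 0, F 1, …` of all facets such that each facet meets the union of the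
previous ones in a pure subcomplex of codimension one. -/
def Shellable (faces : Finset V → Prop) : Prop :=
  ∃ (t : ℕ) (F : Fin t → Finset V),
    (∀ i, IsFacet faces (F i)) ∧
    (∀ F', IsFacet faces F' → ∃ i, F' = F i) ∧
    Function.Injective F ∧
    ∀ k : Fin t, 0 < (k : ℕ) → ∀ σ : Finset V, σ ⊆ F k →
      (∃ i, i < k ∧ σ ⊆ F i) →
      ∃ τ : Finset V, σ ⊆ τ ∧ τ ⊆ F k ∧ (∃ i, i < k ∧ τ ⊆ F i) ∧
        τ.card = (F k).card - 1

/-- Vertex decomposability of the complex with face predicate `faces`. -/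
inductive VertexDecomposable [DecidableEq V] : (Finset V → Prop) → Prop
  | simplex (faces : Finset V → Prop) (F : Finset V)
      (h : ∀ F', faces F' ↔ F' ⊆ F) : VertexDecomposable faces
  | shed (faces : Finset V → Prop) (v : V)
      (hdel : VertexDecomposable (fun F => faces F ∧ v ∉ F))
      (hlink : VertexDecomposable (fun F => v ∉ F ∧ faces (insert v F)))
      (hshed : ∀ F, v ∉ F → faces (insert v F) →
        ¬ IsFacet (fun F' => faces F' ∧ v ∉ F') F) :
      VertexDecomposable faces

section AuxLemmas



variable {G : SimpleGraph V} {F : Finset V} {M M' : Finset (Sym2 V)}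

lemma matchingOn_subset (h : IsMatchingOn G F M) (hs : M' ⊆ M) : IsMatchingOn G F M' :=
  ⟨fun e he => h.1 e (hs he), fun e he => h.2.1 e (hs he),
   fun e he e' he' hne => h.2.2 e (hs he) e' (hs he') hne⟩

lemma matchingOn_trim (h : IsMatchingOn G F M) {k : ℕ} (hk : k ≤ M.card) :
    ∃ M', IsMatchingOn G F M' ∧ M'.card = k := by
  obtain ⟨M', hs, hc⟩ := Finset.exists_subset_card_eq hk
  exact ⟨M', matchingOn_subset h hs, hc⟩

lemma matchingOn_mono (h : IsMatchingOn G F M) {F' : Finset V} (hF : F ⊆ F') :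
    IsMatchingOn G F' M :=
  ⟨h.1, fun e he v hv => hF (h.2.1 e he v hv), h.2.2⟩

lemma matchingOn_unique (h : IsMatchingOn G F M) {x y y' : V}
    (h1 : s(x, y) ∈ M) (h2 : s(x, y') ∈ M) : y = y' := by
  by_cases heq : s(x, y) = s(x, y')
  · rcases Sym2.eq_iff.mp heq with ⟨_, h⟩ | ⟨h1, h2⟩
    · exact h
    · rw [h2, h1]
  · exact absurd (Sym2.mem_mk_left x y') (h.2.2 _ h1 _ h2 heq x (Sym2.mem_mk_left x y))

lemma matchingOn_card_le (h : IsMatchingOn G F M) : M.card ≤ F.card := by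
  refine Finset.card_le_card_of_injOn (fun e => e.out.1)
    (fun e he => h.2.1 e he _ (Sym2.out_fst_mem e)) ?_
  intro e he e' he' heq
  by_contra hne
  simp only at heq
  exact h.2.2 e he e' he' hne _ (Sym2.out_fst_mem e) (heq ▸ Sym2.out_fst_mem e')



lemma card_range_filter_even (m : ℕ) :
    ((Finset.range m).filter (fun k => k % 2 = 0)).card = (m + 1) / 2 := by
  induction m with
  | zero => simp
  | succ m ih =>
    rw [Finset.range_add_one, Finset.filter_insert]
    by_cases hm : m % 2 = 0
    · rw [if_pos hm, Finset.card_insert_of_notMem (by simp)]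
      omega
    · rw [if_neg hm]; omega

section Walks

variable {V : Type*} {H : SimpleGraph V}

lemma walk_from_seq (p : ℕ → V) :
    ∀ m, (∀ k, k < m → H.Adj (p k) (p (k + 1))) →
    (∀ i, i ≤ m → ∀ j, j ≤ m → p i = p j → i = j) →
    ∃ w : H.Walk (p 0) (p m), w.IsPath ∧ w.length = m ∧
      w.edges = (List.range m).map (fun k => s(p k, p (k + 1))) ∧
      w.support = (List.range (m + 1)).map p := by
  intro m
  induction m generalizing p with
  | zero => exact fun _ _ => ⟨SimpleGraph.Walk.nil, by simp, by simp, by simp, by simp [List.range_succ]⟩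
  | succ m ih =>
    intro hadj hinj
    obtain ⟨w', hw'path, hw'len, hw'edges, hw'sup⟩ := ih (fun k => p (k + 1))
      (fun k hk => hadj (k + 1) (by omega))
      (fun i hi j hj hij => by
        have := hinj (i + 1) (by omega) (j + 1) (by omega) hij; omega)
    have hsup : ∀ x ∈ w'.support, ∃ k, k ≤ m ∧ x = p (k + 1) := by
      intro x hx
      rw [hw'sup] at hx
      obtain ⟨k, hk, rfl⟩ := List.mem_map.mp hx
      exact ⟨k, Nat.lt_succ_iff.mp (List.mem_range.mp hk), rfl⟩
    have h0 : p 0 ∉ w'.support := by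
      intro hx
      obtain ⟨k, hk, hkx⟩ := hsup _ hx
      have := hinj 0 (by omega) (k + 1) (by omega) hkx
      omega
    refine ⟨SimpleGraph.Walk.cons (hadj 0 (by omega)) w', hw'path.cons h0, by simp [hw'len],
      ?_, ?_⟩
    · rw [SimpleGraph.Walk.edges_cons, hw'edges, List.range_succ_eq_map]
      simp [List.map_map, Function.comp]
    · rw [SimpleGraph.Walk.support_cons, hw'sup, List.range_succ_eq_map (n := m + 1)]
      simp [List.map_map, Function.comp]



lemma no_odd_closed_seq (hbip : ∀ (v : V) (w : H.Walk v v), w.IsCycle → ¬ Odd w.length)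
    (p : ℕ → V) (m : ℕ) (hm : 2 ≤ m) (hmod : m % 2 = 0)
    (hadj : ∀ k, k < m → H.Adj (p k) (p (k + 1))) (hclose : H.Adj (p m) (p 0))
    (hinj : ∀ i, i ≤ m → ∀ j, j ≤ m → p i = p j → i = j) : False := by
  obtain ⟨w, hpath, hlen, hedges, -⟩ := walk_from_seq p m hadj hinj
  have hne : s(p m, p 0) ∉ w.edges := by
    rw [hedges]
    intro hmem
    obtain ⟨k, hk, hke⟩ := List.mem_map.mp hmem
    rw [List.mem_range] at hk
    rcases Sym2.eq_iff.mp hke.symm with ⟨h1, h2⟩ | ⟨h1, h2⟩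
    · have := hinj k (by omega) m (by omega) h1.symm
      omega
    · have h3 := hinj k (by omega) 0 (by omega) h2.symm
      have h4 := hinj (k + 1) (by omega) m (by omega) h1.symm
      omega
  have hcyc : (SimpleGraph.Walk.cons hclose w).IsCycle :=
    (SimpleGraph.Walk.cons_isCycle_iff w hclose).mpr ⟨hpath, hne⟩
  exact hbip _ _ hcyc (by rw [SimpleGraph.Walk.length_cons, hlen]; exact ⟨m / 2, by omega⟩)

end Walks

noncomputable def pmPartner (M : Finset (Sym2 V)) (x : V) : V :=
  letI := Classical.propDecidable (∃ y, s(x, y) ∈ M)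
  if h : ∃ y, s(x, y) ∈ M then h.choose else x

lemma pmPartner_spec {M : Finset (Sym2 V)} {x : V} (h : ∃ y, s(x, y) ∈ M) :
    s(x, pmPartner M x) ∈ M := by
  unfold pmPartner
  rw [dif_pos h]
  exact h.choose_spec

def mkSel (M₁ M₂ : Finset (Sym2 V)) (k : ℕ) : Finset (Sym2 V) :=
  if k % 2 = 0 then M₁ else M₂

lemma mkSel_even {M₁ M₂ : Finset (Sym2 V)} {k : ℕ} (h : k % 2 = 0) :
    mkSel M₁ M₂ k = M₁ := if_pos h

lemma mkSel_odd {M₁ M₂ : Finset (Sym2 V)} {k : ℕ} (h : k % 2 = 1) :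
    mkSel M₁ M₂ k = M₂ := if_neg (by omega)

noncomputable def walkSeq (M₁ M₂ : Finset (Sym2 V)) (v : V) : ℕ → V
  | 0 => v
  | (k + 1) => pmPartner (mkSel M₁ M₂ k) (walkSeq M₁ M₂ v k)

lemma card_range_filter_odd (m : ℕ) :
    ((Finset.range m).filter (fun k => k % 2 = 1)).card = m / 2 := by
  induction m with
  | zero => simp
  | succ m ih =>
    rw [Finset.range_add_one, Finset.filter_insert]
    by_cases hm : m % 2 = 1
    · rw [if_pos hm, Finset.card_insert_of_notMem (by simp)]
      omega
    · rw [if_neg hm]; omega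

lemma essential_vertex [Fintype V] {H : SimpleGraph V}
    (hbip : ∀ (v : V) (w : H.Walk v v), w.IsCycle → ¬ Odd w.length)
    (U : Finset V) (t : ℕ)
    (hmax : ¬ ∃ M : Finset (Sym2 V), IsMatchingOn H U M ∧ M.card = t + 1)
    (M₁ M₂ : Finset (Sym2 V)) (h₁ : IsMatchingOn H U M₁) (h₂ : IsMatchingOn H U M₂)
    (c₁ : M₁.card = t) (c₂ : M₂.card = t)
    (u v : V) (huv : H.Adj u v) (hu : u ∈ U) (hv : v ∈ U)
    (hu₁ : ∀ e ∈ M₁, u ∉ e) (hv₂ : ∀ e ∈ M₂, v ∉ e) : False := by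
  classical
  set p : ℕ → V := walkSeq M₁ M₂ v with hp
  have hp0 : p 0 = v := rfl
  have hMk : ∀ k, IsMatchingOn H U (mkSel M₁ M₂ k) := by
    intro k; unfold mkSel; split <;> assumption
  -- v is covered by M₁
  have hcovv : ∃ y, s(v, y) ∈ M₁ := by
    by_contra hno
    apply hmax
    refine ⟨insert s(u, v) M₁, ⟨?_, ?_, ?_⟩, ?_⟩
    · intro e he
      rcases Finset.mem_insert.mp he with rfl | he
      · exact H.mem_edgeSet.mpr huv
      · exact h₁.1 e he
    · intro e he x hx
      rcases Finset.mem_insert.mp he with rfl | he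
      · rcases Sym2.mem_iff.mp hx with rfl | rfl
        · exact hu
        · exact hv
      · exact h₁.2.1 e he x hx
    · intro e he e' he' hne x hx hx'
      rcases Finset.mem_insert.mp he with he0 | he0
      · rcases Finset.mem_insert.mp he' with he1 | he1
        · exact hne (he0.trans he1.symm)
        · subst he0
          rcases Sym2.mem_iff.mp hx with hxu | hxv
          · exact hu₁ e' he1 (hxu ▸ hx')
          · obtain ⟨y, hy⟩ := Sym2.mem_iff_exists.mp (hxv ▸ hx' : v ∈ e')
            exact hno ⟨y, hy ▸ he1⟩
      · rcases Finset.mem_insert.mp he' with he1 | he1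
        · subst he1
          rcases Sym2.mem_iff.mp hx' with hxu | hxv
          · exact hu₁ e he0 (hxu ▸ hx)
          · obtain ⟨y, hy⟩ := Sym2.mem_iff_exists.mp (hxv ▸ hx : v ∈ e)
            exact hno ⟨y, hy ▸ he0⟩
        · exact h₁.2.2 e he0 e' he1 hne x hx hx'
    · rw [Finset.card_insert_of_notMem (fun hmem => hu₁ _ hmem (Sym2.mem_mk_left u v)), c₁]
  -- coverage predicate
  have hcov0 : ∃ y, s(p 0, y) ∈ mkSel M₁ M₂ 0 := by
    rw [hp0, mkSel_even (by norm_num)]; exact hcovv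
  have einM : ∀ k, (∃ y, s(p k, y) ∈ mkSel M₁ M₂ k) →
      s(p k, p (k + 1)) ∈ mkSel M₁ M₂ k := by
    intro k hk
    have : p (k + 1) = pmPartner (mkSel M₁ M₂ k) (p k) := rfl
    rw [this]
    exact pmPartner_spec hk
  -- injectivity of the walk
  have inj : ∀ j, (∀ k, k < j → ∃ y, s(p k, y) ∈ mkSel M₁ M₂ k) →
      ∀ i, i < j → p i ≠ p j := by
    intro j
    induction j using Nat.strong_induction_on with
    | _ j IH =>
      intro hgood i hij heq
      obtain ⟨j', rfl⟩ : ∃ j', j = j' + 1 := ⟨j - 1, by omega⟩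
      by_cases hpar : i % 2 = (j' + 1) % 2
      · rcases Nat.eq_zero_or_pos i with rfl | hi
        · have hj' : j' % 2 = 1 := by omega
          have he := einM j' (hgood j' (by omega))
          rw [mkSel_odd hj'] at he
          have hvmem : v ∈ s(p j', p (j' + 1)) := by
            rw [← hp0, heq]; exact Sym2.mem_mk_right _ _
          exact hv₂ _ he hvmem
        · obtain ⟨i', rfl⟩ : ∃ i', i = i' + 1 := ⟨i - 1, by omega⟩
          have hpar' : i' % 2 = j' % 2 := by omega
          have hei := einM i' (hgood i' (by omega))
          have hej := einM j' (hgood j' (by omega))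
          rw [show mkSel M₁ M₂ j' = mkSel M₁ M₂ i' from by unfold mkSel; rw [hpar']] at hej
          have heqe : s(p i', p (i' + 1)) = s(p j', p (j' + 1)) := by
            by_contra hne
            have hmem : p (i' + 1) ∈ s(p j', p (j' + 1)) := by
              rw [heq]; exact Sym2.mem_mk_right _ _
            exact (hMk i').2.2 _ hei _ hej hne (p (i' + 1)) (Sym2.mem_mk_right _ _) hmem
          have hpij : p i' = p j' := by
            rcases Sym2.eq_iff.mp heqe with ⟨h1, _⟩ | ⟨h1, h2⟩
            · exact h1
            · rw [h1, ← heq, h2]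
          exact IH j' (by omega) (fun k hk => hgood k (by omega)) i' (by omega) hpij
      · by_cases hgap : i + 1 = j' + 1
        · have he := einM i (hgood i (by omega))
          have hadj : H.Adj (p i) (p (i + 1)) := H.mem_edgeSet.mp ((hMk i).1 _ he)
          have : p i = p (i + 1) := by rw [heq, ← hgap]
          exact hadj.ne this
        · have hge : i + 2 ≤ j' := by omega
          have hei := einM i (hgood i (by omega))
          have hej := einM j' (hgood j' (by omega))
          have hpar' : j' % 2 = i % 2 := by omega
          rw [show mkSel M₁ M₂ j' = mkSel M₁ M₂ i from by unfold mkSel; rw [hpar']] at hej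
          have heqe : s(p i, p (i + 1)) = s(p j', p (j' + 1)) := by
            by_contra hne
            have hmem : p i ∈ s(p j', p (j' + 1)) := by
              rw [heq]; exact Sym2.mem_mk_right _ _
            exact (hMk i).2.2 _ hei _ hej hne (p i) (Sym2.mem_mk_left _ _) hmem
          rcases Sym2.eq_iff.mp heqe with ⟨h1, _⟩ | ⟨h1, h2⟩
          · exact IH j' (by omega) (fun k hk => hgood k (by omega)) i (by omega) h1
          · exact IH j' (by omega) (fun k hk => hgood k (by omega)) (i + 1) (by omega) h2
  -- there is a first uncovered index
  have hex : ∃ k, ¬ ∃ y, s(p k, y) ∈ mkSel M₁ M₂ k := by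
    by_contra hall
    push_neg at hall
    obtain ⟨a, b, hne, hab⟩ := Finite.exists_ne_map_eq_of_infinite p
    rcases hne.lt_or_gt with h | h
    · exact inj b (fun k _ => hall k) a h hab
    · exact inj a (fun k _ => hall k) b h hab.symm
  set m := Nat.find hex with hmdef
  have hbadm : ¬ ∃ y, s(p m, y) ∈ mkSel M₁ M₂ m := Nat.find_spec hex
  have hgoodm : ∀ k, k < m → ∃ y, s(p k, y) ∈ mkSel M₁ M₂ k :=
    fun k hk => not_not.mp (Nat.find_min hex hk)
  have hm1 : 1 ≤ m := by
    rcases Nat.eq_zero_or_pos m with h0 | h0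
    · exact absurd (h0 ▸ hcov0) hbadm
    · exact h0
  have injm : ∀ i, i ≤ m → ∀ j, j ≤ m → p i = p j → i = j := by
    intro i hi j hj heq
    rcases lt_trichotomy i j with h | h | h
    · exact absurd heq (inj j (fun k hk => hgoodm k (by omega)) i h)
    · exact h
    · exact absurd heq.symm (inj i (fun k hk => hgoodm k (by omega)) j h)
  have hem : ∀ k, k < m → s(p k, p (k + 1)) ∈ mkSel M₁ M₂ k :=
    fun k hk => einM k (hgoodm k hk)
  have hpU : ∀ k, k ≤ m → p k ∈ U := by
    intro k
    induction k with
    | zero => exact fun _ => hp0 ▸ hv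
    | succ k ih =>
      intro hk
      exact (hMk k).2.1 _ (hem k (by omega)) _ (Sym2.mem_mk_right _ _)
  have einj : ∀ k, k < m → ∀ l, l < m →
      s(p k, p (k + 1)) = s(p l, p (l + 1)) → k = l := by
    intro k hk l hl heq
    rcases Sym2.eq_iff.mp heq with ⟨h1, _⟩ | ⟨h1, h2⟩
    · exact injm k (by omega) l (by omega) h1
    · have e1 := injm k (by omega) (l + 1) (by omega) h1
      have e2 := injm (k + 1) (by omega) l (by omega) h2
      omega
  -- sharing lemmas
  have hshare1 : ∀ e ∈ M₁, ∀ k, k ≤ m → p k ∈ e →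
      ∃ l, l < m ∧ l % 2 = 0 ∧ e = s(p l, p (l + 1)) := by
    intro e he k hk hpk
    rcases Nat.eq_zero_or_pos k with rfl | hkpos
    · have he0 : s(p 0, p 1) ∈ M₁ := by
        have := hem 0 (by omega); rwa [mkSel_even (by norm_num)] at this
      refine ⟨0, by omega, by norm_num, ?_⟩
      by_contra hne
      exact h₁.2.2 e he _ he0 hne _ hpk (Sym2.mem_mk_left _ _)
    · obtain ⟨k', rfl⟩ : ∃ k', k = k' + 1 := ⟨k - 1, by omega⟩
      by_cases hk' : k' % 2 = 0
      · have he' : s(p k', p (k' + 1)) ∈ M₁ := by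
          have := hem k' (by omega); rwa [mkSel_even hk'] at this
        refine ⟨k', by omega, hk', ?_⟩
        by_contra hne
        exact h₁.2.2 e he _ he' hne _ hpk (Sym2.mem_mk_right _ _)
      · -- k = k' + 1 is even
        have hke : (k' + 1) % 2 = 0 := by omega
        rcases Nat.lt_or_ge (k' + 1) m with hlt | hge
        · have he' : s(p (k' + 1), p (k' + 2)) ∈ M₁ := by
            have := hem (k' + 1) hlt; rwa [mkSel_even hke] at this
          refine ⟨k' + 1, hlt, hke, ?_⟩
          by_contra hne
          exact h₁.2.2 e he _ he' hne _ hpk (Sym2.mem_mk_left _ _)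
        · have hkm : k' + 1 = m := by omega
          exfalso
          apply hbadm
          obtain ⟨y, hy⟩ := Sym2.mem_iff_exists.mp hpk
          rw [← hkm, mkSel_even hke]
          exact ⟨y, hy ▸ he⟩
  have hshare2 : ∀ e ∈ M₂, ∀ k, k ≤ m → p k ∈ e →
      k = 0 ∨ ∃ l, l < m ∧ l % 2 = 1 ∧ e = s(p l, p (l + 1)) := by
    intro e he k hk hpk
    rcases Nat.eq_zero_or_pos k with rfl | hkpos
    · exact Or.inl rfl
    · refine Or.inr ?_
      obtain ⟨k', rfl⟩ : ∃ k', k = k' + 1 := ⟨k - 1, by omega⟩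
      by_cases hk' : k' % 2 = 1
      · have he' : s(p k', p (k' + 1)) ∈ M₂ := by
          have := hem k' (by omega); rwa [mkSel_odd hk'] at this
        refine ⟨k', by omega, hk', ?_⟩
        by_contra hne
        exact h₂.2.2 e he _ he' hne _ hpk (Sym2.mem_mk_right _ _)
      · have hke : (k' + 1) % 2 = 1 := by omega
        rcases Nat.lt_or_ge (k' + 1) m with hlt | hge
        · have he' : s(p (k' + 1), p (k' + 2)) ∈ M₂ := by
            have := hem (k' + 1) hlt; rwa [mkSel_odd hke] at this
          refine ⟨k' + 1, hlt, hke, ?_⟩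
          by_contra hne
          exact h₂.2.2 e he _ he' hne _ hpk (Sym2.mem_mk_left _ _)
        · have hkm : k' + 1 = m := by omega
          exfalso
          apply hbadm
          obtain ⟨y, hy⟩ := Sym2.mem_iff_exists.mp hpk
          rw [← hkm, mkSel_odd hke]
          exact ⟨y, hy ▸ he⟩
  -- the walk edge sets
  set W₁ : Finset (Sym2 V) :=
    ((Finset.range m).filter (fun k => k % 2 = 0)).image (fun k => s(p k, p (k + 1))) with hW₁
  set W₂ : Finset (Sym2 V) :=
    ((Finset.range m).filter (fun k => k % 2 = 1)).image (fun k => s(p k, p (k + 1))) with hW₂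
  have hW1mem : ∀ {e}, e ∈ W₁ ↔ ∃ k, k < m ∧ k % 2 = 0 ∧ e = s(p k, p (k + 1)) := by
    intro e
    simp only [hW₁, Finset.mem_image, Finset.mem_filter, Finset.mem_range]
    constructor
    · rintro ⟨k, ⟨hk, hk2⟩, rfl⟩; exact ⟨k, hk, hk2, rfl⟩
    · rintro ⟨k, hk, hk2, rfl⟩; exact ⟨k, ⟨hk, hk2⟩, rfl⟩
  have hW2mem : ∀ {e}, e ∈ W₂ ↔ ∃ k, k < m ∧ k % 2 = 1 ∧ e = s(p k, p (k + 1)) := by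
    intro e
    simp only [hW₂, Finset.mem_image, Finset.mem_filter, Finset.mem_range]
    constructor
    · rintro ⟨k, ⟨hk, hk2⟩, rfl⟩; exact ⟨k, hk, hk2, rfl⟩
    · rintro ⟨k, hk, hk2, rfl⟩; exact ⟨k, ⟨hk, hk2⟩, rfl⟩
  have hW1sub : W₁ ⊆ M₁ := by
    intro e he
    obtain ⟨k, hk, hk2, rfl⟩ := hW1mem.mp he
    have := hem k hk; rwa [mkSel_even hk2] at this
  have hW2sub : W₂ ⊆ M₂ := by
    intro e he
    obtain ⟨k, hk, hk2, rfl⟩ := hW2mem.mp he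
    have := hem k hk; rwa [mkSel_odd hk2] at this
  have hW1card : W₁.card = (m + 1) / 2 := by
    rw [hW₁, Finset.card_image_of_injOn, card_range_filter_even]
    intro k hk l hl heq
    simp only [Finset.coe_filter, Finset.mem_range, Set.mem_setOf_eq] at hk hl
    exact einj k hk.1 l hl.1 heq
  have hW2card : W₂.card = m / 2 := by
    rw [hW₂, Finset.card_image_of_injOn, card_range_filter_odd]
    intro k hk l hl heq
    simp only [Finset.coe_filter, Finset.mem_range, Set.mem_setOf_eq] at hk hl
    exact einj k hk.1 l hl.1 heq
  have hW1le : W₁.card ≤ t := c₁ ▸ Finset.card_le_card hW1sub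
  have hW2le : W₂.card ≤ t := c₂ ▸ Finset.card_le_card hW2sub
  rcases Nat.even_or_odd m with hmev | hmod
  · -- m even : either u is on the walk (giving an odd cycle) or we can augment
    have hmev' : m % 2 = 0 := Nat.even_iff.mp hmev
    by_cases hwalk : ∃ k, k ≤ m ∧ p k = u
    · obtain ⟨k, hk, hku⟩ := hwalk
      by_cases hkm : k = m
      · -- odd closed walk
        refine no_odd_closed_seq hbip p m (by omega) hmev' ?_ ?_ injm
        · intro l hl
          exact H.mem_edgeSet.mp ((hMk l).1 _ (hem l hl))
        · have h1 : p m = u := hkm ▸ hku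
          rw [h1, hp0]
          exact huv
      · -- u is matched by M₁: contradiction
        by_cases hk2 : k % 2 = 0
        · have he : s(p k, p (k + 1)) ∈ M₁ := by
            have := hem k (by omega); rwa [mkSel_even hk2] at this
          exact hu₁ _ he (hku ▸ Sym2.mem_mk_left _ _)
        · obtain ⟨k', rfl⟩ : ∃ k', k = k' + 1 := ⟨k - 1, by omega⟩
          have he : s(p k', p (k' + 1)) ∈ M₁ := by
            have := hem k' (by omega); rwa [mkSel_even (by omega)] at this
          exact hu₁ _ he (hku ▸ Sym2.mem_mk_right _ _)
    · -- u not on walk: augment M₁ along the walk plus the edge uv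
      push_neg at hwalk
      have keyuv : ∀ e' ∈ (M₁ \ W₁) ∪ W₂, ∀ x ∈ s(u, v), x ∉ e' := by
        intro e' he' x hx hx'
        rcases Finset.mem_union.mp he' with he' | he'
        · obtain ⟨he'M, he'W⟩ := Finset.mem_sdiff.mp he'
          rcases Sym2.mem_iff.mp hx with rfl | rfl
          · exact hu₁ _ he'M hx'
          · obtain ⟨l, hl, hl2, hle⟩ := hshare1 _ he'M 0 (by omega) (hp0 ▸ hx')
            exact he'W (hW1mem.mpr ⟨l, hl, hl2, hle⟩)
        · obtain ⟨k, hk, hk2, rfl⟩ := hW2mem.mp he'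
          rcases Sym2.mem_iff.mp hx with rfl | rfl
          · rcases Sym2.mem_iff.mp hx' with h' | h'
            · exact hwalk k (by omega) h'.symm
            · exact hwalk (k + 1) (by omega) h'.symm
          · exact hv₂ _ (hW2sub he') hx'
      have keymix : ∀ e ∈ M₁ \ W₁, ∀ e' ∈ W₂, ∀ x ∈ e, x ∉ e' := by
        intro e he e' he' x hx hx'
        obtain ⟨heM, heW⟩ := Finset.mem_sdiff.mp he
        obtain ⟨k, hk, hk2, rfl⟩ := hW2mem.mp he'
        rcases Sym2.mem_iff.mp hx' with h' | h'
        · obtain ⟨l, hl, hl2, hle⟩ := hshare1 _ heM k (by omega) (h' ▸ hx)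
          exact heW (hW1mem.mpr ⟨l, hl, hl2, hle⟩)
        · obtain ⟨l, hl, hl2, hle⟩ := hshare1 _ heM (k + 1) (by omega) (h' ▸ hx)
          exact heW (hW1mem.mpr ⟨l, hl, hl2, hle⟩)
      apply hmax
      refine ⟨insert s(u, v) ((M₁ \ W₁) ∪ W₂), ⟨?_, ?_, ?_⟩, ?_⟩
      · intro e he
        rcases Finset.mem_insert.mp he with rfl | he
        · exact H.mem_edgeSet.mpr huv
        · rcases Finset.mem_union.mp he with he | he
          · exact h₁.1 _ (Finset.mem_sdiff.mp he).1
          · exact h₂.1 _ (hW2sub he)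
      · intro e he x hx
        rcases Finset.mem_insert.mp he with rfl | he
        · rcases Sym2.mem_iff.mp hx with rfl | rfl
          · exact hu
          · exact hv
        · rcases Finset.mem_union.mp he with he | he
          · exact h₁.2.1 _ (Finset.mem_sdiff.mp he).1 x hx
          · exact h₂.2.1 _ (hW2sub he) x hx
      · -- pairwise disjointness
        intro e he e' he' hne x hx hx'
        rcases Finset.mem_insert.mp he with rfl | he
        · rcases Finset.mem_insert.mp he' with he'' | he'
          · exact hne he''.symm
          · exact keyuv e' he' x hx hx'
        · rcases Finset.mem_insert.mp he' with rfl | he'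
          · exact keyuv e he x hx' hx
          · rcases Finset.mem_union.mp he with he | he <;>
              rcases Finset.mem_union.mp he' with he' | he'
            · exact h₁.2.2 _ (Finset.mem_sdiff.mp he).1 _ (Finset.mem_sdiff.mp he').1 hne x hx hx'
            · exact keymix e he e' he' x hx hx'
            · exact keymix e' he' e he x hx' hx
            · exact h₂.2.2 _ (hW2sub he) _ (hW2sub he') hne x hx hx'
      · -- cardinality
        have hdisj : Disjoint (M₁ \ W₁) W₂ := by
          rw [Finset.disjoint_left]
          intro e he heW2
          obtain ⟨heM, heW⟩ := Finset.mem_sdiff.mp he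
          obtain ⟨k, hk, hk2, rfl⟩ := hW2mem.mp heW2
          obtain ⟨l, hl, hl2, hle⟩ := hshare1 _ heM k (by omega) (Sym2.mem_mk_left _ _)
          exact heW (hW1mem.mpr ⟨l, hl, hl2, hle⟩)
        have hnotmem : s(u, v) ∉ (M₁ \ W₁) ∪ W₂ :=
          fun hmem => keyuv _ hmem u (Sym2.mem_mk_left u v) (Sym2.mem_mk_left u v)
        rw [Finset.card_insert_of_notMem hnotmem, Finset.card_union_of_disjoint hdisj,
          Finset.card_sdiff_of_subset hW1sub, c₁, hW1card, hW2card]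
        omega
  · -- m odd : augment M₂ along the walk
    have hmod' : m % 2 = 1 := Nat.odd_iff.mp hmod
    apply hmax
    refine ⟨(M₂ \ W₂) ∪ W₁, ⟨?_, ?_, ?_⟩, ?_⟩
    · intro e he
      rcases Finset.mem_union.mp he with he | he
      · exact h₂.1 _ (Finset.mem_sdiff.mp he).1
      · exact h₁.1 _ (hW1sub he)
    · intro e he x hx
      rcases Finset.mem_union.mp he with he | he
      · exact h₂.2.1 _ (Finset.mem_sdiff.mp he).1 x hx
      · exact h₁.2.1 _ (hW1sub he) x hx
    · have keymix : ∀ e ∈ M₂ \ W₂, ∀ e' ∈ W₁, ∀ x ∈ e, x ∉ e' := by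
        intro e he e' he' x hx hx'
        obtain ⟨heM, heW⟩ := Finset.mem_sdiff.mp he
        obtain ⟨k, hk, hk2, rfl⟩ := hW1mem.mp he'
        rcases Sym2.mem_iff.mp hx' with h' | h'
        · rcases hshare2 _ heM k (by omega) (h' ▸ hx) with h0 | ⟨l, hl, hl2, hle⟩
          · subst h0
            exact hv₂ _ heM (hp0 ▸ h' ▸ hx)
          · exact heW (hW2mem.mpr ⟨l, hl, hl2, hle⟩)
        · rcases hshare2 _ heM (k + 1) (by omega) (h' ▸ hx) with h0 | ⟨l, hl, hl2, hle⟩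
          · omega
          · exact heW (hW2mem.mpr ⟨l, hl, hl2, hle⟩)
      intro e he e' he' hne x hx hx'
      rcases Finset.mem_union.mp he with he | he <;>
          rcases Finset.mem_union.mp he' with he' | he'
      · exact h₂.2.2 _ (Finset.mem_sdiff.mp he).1 _ (Finset.mem_sdiff.mp he').1 hne x hx hx'
      · exact keymix e he e' he' x hx hx'
      · exact keymix e' he' e he x hx' hx
      · exact h₁.2.2 _ (hW1sub he) _ (hW1sub he') hne x hx hx'
    · have hdisj : Disjoint (M₂ \ W₂) W₁ := by
        rw [Finset.disjoint_left]
        intro e he heW1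
        obtain ⟨heM, heW⟩ := Finset.mem_sdiff.mp he
        obtain ⟨k, hk, hk2, rfl⟩ := hW1mem.mp heW1
        rcases hshare2 _ heM k (by omega) (Sym2.mem_mk_left _ _) with h0 | ⟨l, hl, hl2, hle⟩
        · subst h0
          exact hv₂ _ heM (hp0 ▸ Sym2.mem_mk_left _ _)
        · exact heW (hW2mem.mpr ⟨l, hl, hl2, hle⟩)
      rw [Finset.card_union_of_disjoint hdisj, Finset.card_sdiff_of_subset hW2sub, c₂, hW1card, hW2card]
      omega

lemma whisker_edge {H : SimpleGraph V} {e : Sym2 (V ⊕ V)} (he : e ∈ (whisker H).edgeSet) :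
    (∃ a b, H.Adj a b ∧ e = s(Sum.inl a, Sum.inl b)) ∨ (∃ a, e = s(Sum.inl a, Sum.inr a)) := by
  induction e with
  | _ x y =>
    have hadj : (whisker H).Adj x y := he
    rcases hadj with ⟨a, b, rfl, rfl, hab⟩ | ⟨a, ⟨rfl, rfl⟩ | ⟨rfl, rfl⟩⟩
    · exact Or.inl ⟨a, b, hab, rfl⟩
    · exact Or.inr ⟨a, rfl⟩
    · exact Or.inr ⟨a, Sym2.eq_swap⟩

section Whisk

variable [Fintype V] [DecidableEq V] {H : SimpleGraph V}

/-- Projection: a matching on `F` in the whisker graph gives a matching of `H` on the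
"only `x_i`" vertices, of size at least `M.card - D.card`. -/
lemma whisker_project {F : Finset (V ⊕ V)} {M : Finset (Sym2 (V ⊕ V))}
    (hM : IsMatchingOn (whisker H) F M) :
    ∃ M' : Finset (Sym2 V),
      IsMatchingOn H (Finset.univ.filter (fun a => Sum.inl a ∈ F ∧ Sum.inr a ∉ F)) M' ∧
      M.card ≤ M'.card + (Finset.univ.filter (fun a => Sum.inl a ∈ F ∧ Sum.inr a ∈ F)).card := by
  classical
  set D := Finset.univ.filter (fun a => Sum.inl a ∈ F ∧ Sum.inr a ∈ F) with hD
  set U := Finset.univ.filter (fun a => Sum.inl a ∈ F ∧ Sum.inr a ∉ F) with hU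
  set Bad := M.filter (fun e => ∃ a ∈ D, Sum.inl a ∈ e) with hBad
  have hBadsub : Bad ⊆ M := Finset.filter_subset _ _
  have hBadcard : Bad.card ≤ D.card := by
    rcases Finset.eq_empty_or_nonempty Bad with h0 | ⟨e₀, he₀⟩
    · simp [h0]
    · obtain ⟨a₀, ha₀, -⟩ := (Finset.mem_filter.mp he₀).2
      refine Finset.card_le_card_of_injOn
        (fun e => if h : ∃ a, a ∈ D ∧ Sum.inl a ∈ e then h.choose else a₀) ?_ ?_
      · intro e he
        obtain ⟨a, ha, hae⟩ := (Finset.mem_filter.mp he).2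
        beta_reduce
        rw [dif_pos (⟨a, ha, hae⟩ : ∃ a, a ∈ D ∧ Sum.inl a ∈ e)]
        exact (⟨a, ha, hae⟩ : ∃ a, a ∈ D ∧ Sum.inl a ∈ e).choose_spec.1
      · intro e he e' he' heq
        simp only at heq
        obtain ⟨a, ha, hae⟩ := (Finset.mem_filter.mp he).2
        obtain ⟨a', ha', hae'⟩ := (Finset.mem_filter.mp he').2
        rw [dif_pos ⟨a, ha, hae⟩, dif_pos ⟨a', ha', hae'⟩] at heq
        have h1 := (⟨a, ha, hae⟩ : ∃ a, a ∈ D ∧ Sum.inl a ∈ e).choose_spec.2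
        have h2 := (⟨a', ha', hae'⟩ : ∃ a, a ∈ D ∧ Sum.inl a ∈ e').choose_spec.2
        rw [heq] at h1
        by_contra hne
        exact hM.2.2 _ (hBadsub he) _ (hBadsub he') hne _ h1 h2
  set Good := M \ Bad with hGood
  have hGoodform : ∀ e ∈ Good, ∃ a b, H.Adj a b ∧ a ∈ U ∧ b ∈ U ∧
      e = s(Sum.inl a, Sum.inl b) := by
    intro e he
    obtain ⟨heM, heB⟩ := Finset.mem_sdiff.mp he
    have hnotbad : ¬ ∃ a ∈ D, Sum.inl a ∈ e := by
      intro h; exact heB (Finset.mem_filter.mpr ⟨heM, h⟩)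
    rcases whisker_edge (hM.1 e heM) with ⟨a, b, hab, rfl⟩ | ⟨a, rfl⟩
    · have haF : Sum.inl a ∈ F := hM.2.1 _ heM _ (Sym2.mem_mk_left _ _)
      have hbF : Sum.inl b ∈ F := hM.2.1 _ heM _ (Sym2.mem_mk_right _ _)
      have haD : a ∉ D := fun h => hnotbad ⟨a, h, Sym2.mem_mk_left _ _⟩
      have hbD : b ∉ D := fun h => hnotbad ⟨b, h, Sym2.mem_mk_right _ _⟩
      rw [hD, Finset.mem_filter] at haD hbD
      refine ⟨a, b, hab, ?_, ?_, rfl⟩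
      · exact Finset.mem_filter.mpr ⟨Finset.mem_univ _, haF, fun h => haD ⟨Finset.mem_univ _, haF, h⟩⟩
      · exact Finset.mem_filter.mpr ⟨Finset.mem_univ _, hbF, fun h => hbD ⟨Finset.mem_univ _, hbF, h⟩⟩
    · exfalso
      apply hnotbad
      have haF : Sum.inl a ∈ F := hM.2.1 _ heM _ (Sym2.mem_mk_left _ _)
      have haF' : Sum.inr a ∈ F := hM.2.1 _ heM _ (Sym2.mem_mk_right _ _)
      exact ⟨a, Finset.mem_filter.mpr ⟨Finset.mem_univ _, haF, haF'⟩, Sym2.mem_mk_left _ _⟩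
  set M' := Good.image (Sym2.map (Sum.elim id id)) with hM'
  have hmapleft : ∀ (a b : V), Sym2.map (Sum.elim id id) s(Sum.inl a, Sum.inl b) = s(a, b) := by
    intro a b; rfl
  have hcardM' : M'.card = Good.card := by
    rw [hM']
    apply Finset.card_image_of_injOn
    intro e he e' he' heq
    obtain ⟨a, b, -, -, -, rfl⟩ := hGoodform e he
    obtain ⟨a', b', -, -, -, rfl⟩ := hGoodform e' he'
    rw [hmapleft, hmapleft] at heq
    rcases Sym2.eq_iff.mp heq with ⟨rfl, rfl⟩ | ⟨rfl, rfl⟩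
    · rfl
    · exact Sym2.eq_swap
  refine ⟨M', ⟨?_, ?_, ?_⟩, ?_⟩
  · intro e' he'
    obtain ⟨e, he, rfl⟩ := Finset.mem_image.mp he'
    obtain ⟨a, b, hab, -, -, rfl⟩ := hGoodform e he
    rw [hmapleft]
    exact H.mem_edgeSet.mpr hab
  · intro e' he' x hx
    obtain ⟨e, he, rfl⟩ := Finset.mem_image.mp he'
    obtain ⟨a, b, -, haU, hbU, rfl⟩ := hGoodform e he
    rw [hmapleft] at hx
    rcases Sym2.mem_iff.mp hx with rfl | rfl
    · exact haU
    · exact hbU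
  · intro e1 he1 e2 he2 hne x hx1 hx2
    obtain ⟨f1, hf1, rfl⟩ := Finset.mem_image.mp he1
    obtain ⟨f2, hf2, rfl⟩ := Finset.mem_image.mp he2
    obtain ⟨a, b, -, -, -, rfl⟩ := hGoodform f1 hf1
    obtain ⟨a', b', -, -, -, rfl⟩ := hGoodform f2 hf2
    rw [hmapleft] at hx1 hx2
    have hfne : (s(Sum.inl a, Sum.inl b) : Sym2 (V ⊕ V)) ≠ s(Sum.inl a', Sum.inl b') := by
      intro h; exact hne (by rw [h])
    have hxin1 : Sum.inl x ∈ (s(Sum.inl a, Sum.inl b) : Sym2 (V ⊕ V)) := by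
      rcases Sym2.mem_iff.mp hx1 with rfl | rfl
      · exact Sym2.mem_mk_left _ _
      · exact Sym2.mem_mk_right _ _
    have hxin2 : Sum.inl x ∈ (s(Sum.inl a', Sum.inl b') : Sym2 (V ⊕ V)) := by
      rcases Sym2.mem_iff.mp hx2 with rfl | rfl
      · exact Sym2.mem_mk_left _ _
      · exact Sym2.mem_mk_right _ _
    exact hM.2.2 _ (Finset.mem_sdiff.mp hf1).1 _ (Finset.mem_sdiff.mp hf2).1 hfne _ hxin1 hxin2
  · have : M.card = Good.card + Bad.card := by
      rw [hGood, Finset.card_sdiff_of_subset hBadsub]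
      have := Finset.card_le_card hBadsub
      omega
    omega

/-- Lifting: a matching of `H` on the "only `x_i`" set plus all whiskers over `D` gives a
matching on `F` in the whisker graph. -/
lemma whisker_lift {F : Finset (V ⊕ V)} {M' : Finset (Sym2 V)}
    (hM' : IsMatchingOn H (Finset.univ.filter (fun a => Sum.inl a ∈ F ∧ Sum.inr a ∉ F)) M') :
    ∃ M : Finset (Sym2 (V ⊕ V)), IsMatchingOn (whisker H) F M ∧
      M.card = M'.card + (Finset.univ.filter (fun a => Sum.inl a ∈ F ∧ Sum.inr a ∈ F)).card := by
  classical
  set D := Finset.univ.filter (fun a => Sum.inl a ∈ F ∧ Sum.inr a ∈ F) with hD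
  set U := Finset.univ.filter (fun a => Sum.inl a ∈ F ∧ Sum.inr a ∉ F) with hU
  set L : Finset (Sym2 (V ⊕ V)) := M'.image (Sym2.map Sum.inl) with hL
  set P : Finset (Sym2 (V ⊕ V)) := D.image (fun a => s(Sum.inl a, Sum.inr a)) with hP
  have hM'form : ∀ e ∈ M', ∃ a b, H.Adj a b ∧ a ∈ U ∧ b ∈ U ∧ e = s(a, b) := by
    intro e he
    have h1 := hM'.1 e he
    have h2 := hM'.2.1 e he
    induction e with
    | _ a b =>
      exact ⟨a, b, h1, h2 a (Sym2.mem_mk_left _ _), h2 b (Sym2.mem_mk_right _ _), rfl⟩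
  have hLform : ∀ f ∈ L, ∃ a b, H.Adj a b ∧ a ∈ U ∧ b ∈ U ∧
      f = s(Sum.inl a, Sum.inl b) ∧ s(a, b) ∈ M' := by
    intro f hf
    obtain ⟨e, he, rfl⟩ := Finset.mem_image.mp hf
    obtain ⟨a, b, hab, haU, hbU, rfl⟩ := hM'form e he
    exact ⟨a, b, hab, haU, hbU, rfl, he⟩
  have hPform : ∀ f ∈ P, ∃ a, a ∈ D ∧ f = s(Sum.inl a, Sum.inr a) := by
    intro f hf
    obtain ⟨a, ha, rfl⟩ := Finset.mem_image.mp hf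
    exact ⟨a, ha, rfl⟩
  have hUD : ∀ a, a ∈ U → a ∉ D := by
    intro a haU haD
    rw [hU, Finset.mem_filter] at haU
    rw [hD, Finset.mem_filter] at haD
    exact haU.2.2 haD.2.2
  have hdisj : Disjoint L P := by
    rw [Finset.disjoint_left]
    intro f hfL hfP
    obtain ⟨a, b, -, -, -, rfl, -⟩ := hLform f hfL
    obtain ⟨c, -, hc⟩ := hPform _ hfP
    rcases Sym2.eq_iff.mp hc with ⟨-, h2⟩ | ⟨h1, -⟩
    · exact Sum.inl_ne_inr h2
    · exact Sum.inl_ne_inr h1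
  refine ⟨L ∪ P, ⟨?_, ?_, ?_⟩, ?_⟩
  · intro f hf
    rcases Finset.mem_union.mp hf with hf | hf
    · obtain ⟨a, b, hab, -, -, rfl, -⟩ := hLform f hf
      exact Or.inl ⟨a, b, rfl, rfl, hab⟩
    · obtain ⟨a, -, rfl⟩ := hPform f hf
      exact Or.inr ⟨a, Or.inl ⟨rfl, rfl⟩⟩
  · intro f hf x hx
    rcases Finset.mem_union.mp hf with hf | hf
    · obtain ⟨a, b, -, haU, hbU, rfl, -⟩ := hLform f hf
      rw [hU, Finset.mem_filter] at haU hbU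
      rcases Sym2.mem_iff.mp hx with rfl | rfl
      · exact haU.2.1
      · exact hbU.2.1
    · obtain ⟨a, ha, rfl⟩ := hPform f hf
      rw [hD, Finset.mem_filter] at ha
      rcases Sym2.mem_iff.mp hx with rfl | rfl
      · exact ha.2.1
      · exact ha.2.2
  · intro f hf f' hf' hne x hx hx'
    rcases Finset.mem_union.mp hf with hf | hf <;> rcases Finset.mem_union.mp hf' with hf' | hf'
    · obtain ⟨a, b, -, -, -, rfl, habM⟩ := hLform f hf
      obtain ⟨a', b', -, -, -, rfl, habM'⟩ := hLform f' hf'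
      have hne' : (s(a, b) : Sym2 V) ≠ s(a', b') := by
        intro h
        apply hne
        rcases Sym2.eq_iff.mp h with ⟨rfl, rfl⟩ | ⟨rfl, rfl⟩
        · rfl
        · exact Sym2.eq_swap
      rcases Sym2.mem_iff.mp hx with rfl | rfl <;>
        rcases Sym2.mem_iff.mp hx' with h' | h'
      · exact hM'.2.2 _ habM _ habM' hne' a (Sym2.mem_mk_left _ _)
          (by rw [Sum.inl_injective h']; exact Sym2.mem_mk_left _ _)
      · exact hM'.2.2 _ habM _ habM' hne' a (Sym2.mem_mk_left _ _)
          (by rw [Sum.inl_injective h']; exact Sym2.mem_mk_right _ _)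
      · exact hM'.2.2 _ habM _ habM' hne' b (Sym2.mem_mk_right _ _)
          (by rw [Sum.inl_injective h']; exact Sym2.mem_mk_left _ _)
      · exact hM'.2.2 _ habM _ habM' hne' b (Sym2.mem_mk_right _ _)
          (by rw [Sum.inl_injective h']; exact Sym2.mem_mk_right _ _)
    · obtain ⟨a, b, -, haU, hbU, rfl, -⟩ := hLform f hf
      obtain ⟨c, hcD, rfl⟩ := hPform f' hf'
      rcases Sym2.mem_iff.mp hx' with h' | h'
      · rcases Sym2.mem_iff.mp hx with rfl | rfl
        · exact hUD a haU (by rw [← Sum.inl_injective h'] at hcD; exact hcD)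
        · exact hUD b hbU (by rw [← Sum.inl_injective h'] at hcD; exact hcD)
      · subst h'
        rcases Sym2.mem_iff.mp hx with h | h
        · exact Sum.inl_ne_inr h.symm
        · exact Sum.inl_ne_inr h.symm
    · obtain ⟨a, b, -, haU, hbU, rfl, -⟩ := hLform f' hf'
      obtain ⟨c, hcD, rfl⟩ := hPform f hf
      rcases Sym2.mem_iff.mp hx with h | h
      · rcases Sym2.mem_iff.mp hx' with rfl | rfl
        · exact hUD a haU (by rw [← Sum.inl_injective h] at hcD; exact hcD)
        · exact hUD b hbU (by rw [← Sum.inl_injective h] at hcD; exact hcD)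
      · subst h
        rcases Sym2.mem_iff.mp hx' with h | h
        · exact Sum.inl_ne_inr h.symm
        · exact Sum.inl_ne_inr h.symm
    · obtain ⟨a, haD, rfl⟩ := hPform f hf
      obtain ⟨a', haD', rfl⟩ := hPform f' hf'
      have : a ≠ a' := fun h => hne (by rw [h])
      rcases Sym2.mem_iff.mp hx with rfl | rfl <;> rcases Sym2.mem_iff.mp hx' with h' | h'
      · exact this (Sum.inl_injective h')
      · exact Sum.inl_ne_inr h'
      · exact Sum.inr_ne_inl h'
      · exact this (Sum.inr_injective h')
  · rw [Finset.card_union_of_disjoint hdisj, hL, hP,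
      Finset.card_image_of_injOn, Finset.card_image_of_injOn]
    · intro a _ a' _ h
      rcases Sym2.eq_iff.mp h with ⟨h1, -⟩ | ⟨h1, -⟩
      · exact Sum.inl_injective h1
      · exact (Sum.inl_ne_inr h1).elim
    · intro e he e' he' h
      obtain ⟨a, b, -, -, -, rfl⟩ := hM'form e he
      obtain ⟨a', b', -, -, -, rfl⟩ := hM'form e' he'
      simp only [Sym2.map_pair_eq] at h
      rcases Sym2.eq_iff.mp h with ⟨h1, h2⟩ | ⟨h1, h2⟩
      · rw [Sum.inl_injective h1, Sum.inl_injective h2]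
      · rw [Sum.inl_injective h1, Sum.inl_injective h2]
        exact Sym2.eq_swap

/-- Any matching in the whisker graph has size at most `|V|`. -/
lemma whisker_matching_card_le {F : Finset (V ⊕ V)} {M : Finset (Sym2 (V ⊕ V))}
    (hM : IsMatchingOn (whisker H) F M) : M.card ≤ Fintype.card V := by
  classical
  rcases Finset.eq_empty_or_nonempty M with h0 | ⟨e₀, he₀⟩
  · simp [h0]
  have hwit : ∀ e ∈ M, ∃ a : V, Sum.inl a ∈ e := by
    intro e he
    rcases whisker_edge (hM.1 e he) with ⟨a, b, -, rfl⟩ | ⟨a, rfl⟩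
    · exact ⟨a, Sym2.mem_mk_left _ _⟩
    · exact ⟨a, Sym2.mem_mk_left _ _⟩
  obtain ⟨a₀, -⟩ := hwit e₀ he₀
  calc M.card ≤ Finset.univ.card := by
        refine Finset.card_le_card_of_injOn
          (fun e => if h : ∃ a : V, Sum.inl a ∈ e then h.choose else a₀)
          (fun e _ => Finset.mem_univ _) ?_
        intro e he e' he' heq
        simp only at heq
        obtain ⟨a, ha⟩ := hwit e (by simpa using he)
        obtain ⟨a', ha'⟩ := hwit e' (by simpa using he')
        rw [dif_pos ⟨a, ha⟩, dif_pos ⟨a', ha'⟩] at heq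
        have h1 := (⟨a, ha⟩ : ∃ x : V, Sum.inl x ∈ e).choose_spec
        have h2 := (⟨a', ha'⟩ : ∃ x : V, Sum.inl x ∈ e').choose_spec
        rw [heq] at h1
        by_contra hne
        exact hM.2.2 _ (by simpa using he) _ (by simpa using he') hne _ h1 h2
    _ = Fintype.card V := Finset.card_univ

end Whisk

end AuxLemmas

/-- if `H` has no odd cycle (is bipartite), then for `1 ≤ q ≤ ν(G)`
the complex `MF^q(W(H))` is pure: every facet has cardinality `n + q - 1`. -/
theorem mfComplex_pure_of_bipartite
    {V : Type*} [Fintype V] [DecidableEq V] (H : SimpleGraph V)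
    (hbip : ∀ (v : V) (w : H.Walk v v), w.IsCycle → ¬ Odd w.length)
    (n : ℕ) (hn : Fintype.card V = n) (ν q : ℕ)
    (hν₁ : ∃ M : Finset (Sym2 (V ⊕ V)),
      IsMatchingOn (whisker H) Finset.univ M ∧ M.card = ν)
    (hν₂ : ∀ M : Finset (Sym2 (V ⊕ V)),
      IsMatchingOn (whisker H) Finset.univ M → M.card ≤ ν)
    (hq : 1 ≤ q) (hqν : q ≤ ν) :
    ∀ F : Finset (V ⊕ V), IsFacet (MFFace (whisker H) q) F →
      F.card = n + q - 1 := by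
  classical
  intro F hF
  set D := Finset.univ.filter (fun a : V => Sum.inl a ∈ F ∧ Sum.inr a ∈ F) with hD
  set U := Finset.univ.filter (fun a : V => Sum.inl a ∈ F ∧ Sum.inr a ∉ F) with hU
  have hface : ¬ ∃ M, IsMatchingOn (whisker H) F M ∧ M.card = q := hF.1
  have hext : ∀ x, x ∉ F →
      ∃ M, IsMatchingOn (whisker H) (insert x F) M ∧ M.card = q := by
    intro x hx
    by_contra h
    have h2 := hF.2 (insert x F) h (Finset.subset_insert x F)
    exact hx (h2 ▸ Finset.mem_insert_self x F)
  have hAB : ∀ a : V, Sum.inl a ∈ F ∨ Sum.inr a ∈ F := by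
    intro a
    by_contra hno
    push_neg at hno
    obtain ⟨M, hM, hcard⟩ := hext (Sum.inr a) hno.2
    apply hface
    refine ⟨M, ⟨hM.1, ?_, hM.2.2⟩, hcard⟩
    intro e he x hx
    have hxF : x ∈ insert (Sum.inr a) F := hM.2.1 e he x hx
    rcases Finset.mem_insert.mp hxF with rfl | hxF
    · exfalso
      rcases whisker_edge (hM.1 e he) with ⟨b, c, hbc, rfl⟩ | ⟨b, rfl⟩
      · rcases Sym2.mem_iff.mp hx with h | h
        · exact Sum.inr_ne_inl h
        · exact Sum.inr_ne_inl h
      · rcases Sym2.mem_iff.mp hx with h | h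
        · exact Sum.inr_ne_inl h
        · obtain rfl : b = a := Sum.inr_injective h.symm
          have hbl := hM.2.1 _ he (Sum.inl b) (Sym2.mem_mk_left _ _)
          rcases Finset.mem_insert.mp hbl with h' | h'
          · exact Sum.inl_ne_inr h'
          · exact hno.1 h'
    · exact hxF
  have hcardF : F.card = n + D.card := by
    set A := Finset.univ.filter (fun a : V => Sum.inl a ∈ F) with hA'
    set B := Finset.univ.filter (fun a : V => Sum.inr a ∈ F) with hB'
    have hFeq : F = A.image Sum.inl ∪ B.image Sum.inr := by
      ext x
      cases x with
      | inl a => simp [hA', hB']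
      | inr a => simp [hA', hB']
    have h1 : F.card = A.card + B.card := by
      rw [hFeq, Finset.card_union_of_disjoint,
        Finset.card_image_of_injective _ Sum.inl_injective,
        Finset.card_image_of_injective _ Sum.inr_injective]
      rw [Finset.disjoint_left]
      rintro x hx1 hx2
      obtain ⟨a, -, rfl⟩ := Finset.mem_image.mp hx1
      obtain ⟨b, -, hb⟩ := Finset.mem_image.mp hx2
      exact Sum.inr_ne_inl hb
    have h2 : A ∪ B = Finset.univ := by
      ext a
      simp only [Finset.mem_union, hA', hB', Finset.mem_filter, Finset.mem_univ, true_and,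
        iff_true]
      exact hAB a
    have h3 : A ∩ B = D := by
      ext a
      simp [hA', hB', hD, Finset.mem_filter, Finset.mem_inter]
    have h4 := Finset.card_union_add_card_inter A B
    rw [h2, h3, Finset.card_univ, hn] at h4
    omega
  set Pm : ℕ → Prop := fun s => ∃ M', IsMatchingOn H U M' ∧ M'.card = s with hPm
  have hP0 : Pm 0 := ⟨∅, ⟨fun e he => absurd he (Finset.notMem_empty e),
    fun e he => absurd he (Finset.notMem_empty e),
    fun e he => absurd he (Finset.notMem_empty e)⟩, Finset.card_empty⟩
  have hPbound : ∀ s, Pm s → s ≤ Fintype.card V := by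
    rintro s ⟨M', hM', rfl⟩
    exact le_trans (matchingOn_card_le hM') (Finset.card_le_univ U)
  set t := Nat.findGreatest Pm (Fintype.card V) with ht
  have hPt : Pm t := Nat.findGreatest_spec (Nat.zero_le _) hP0
  have hnot : ¬ Pm (t + 1) := by
    intro hp
    have hle := hPbound _ hp
    exact Nat.findGreatest_is_greatest (by rw [← ht]; omega) hle hp
  have hle_t : ∀ M', IsMatchingOn H U M' → M'.card ≤ t := by
    intro M' h'
    by_contra hgt
    push_neg at hgt
    obtain ⟨M'', hM'', hc⟩ := matchingOn_trim h' (show t + 1 ≤ M'.card by omega)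
    exact hnot ⟨M'', hM'', hc⟩
  have hdt : D.card + t < q := by
    obtain ⟨M', hM', hc⟩ := hPt
    obtain ⟨M, hM, hcard⟩ := whisker_lift hM'
    rw [← hD] at hcard
    by_contra hge
    push_neg at hge
    obtain ⟨Mq, hMq, hq'⟩ := matchingOn_trim hM (show q ≤ M.card by omega)
    exact hface ⟨Mq, hMq, hq'⟩
  have hUext : ∀ j ∈ U, ∃ M', IsMatchingOn H U M' ∧ (∀ e ∈ M', j ∉ e) ∧
      q ≤ M'.card + D.card + 1 := by
    intro j hj
    rw [hU, Finset.mem_filter] at hj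
    obtain ⟨-, hjl, hjr⟩ := hj
    obtain ⟨M, hM, hMq⟩ := hext (Sum.inr j) hjr
    obtain ⟨M'', hM'', hMc⟩ := whisker_project hM
    have hU' : Finset.univ.filter (fun a : V => Sum.inl a ∈ insert (Sum.inr j) F ∧
        Sum.inr a ∉ insert (Sum.inr j) F) = U.erase j := by
      ext a
      simp only [hU, Finset.mem_filter, Finset.mem_erase, Finset.mem_insert, Finset.mem_univ,
        true_and]
      constructor
      · rintro ⟨h1, h2⟩
        rcases h1 with h1 | h1
        · exact absurd h1 (by simp)
        · refine ⟨?_, h1, fun hr => h2 (Or.inr hr)⟩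
          rintro rfl
          exact h2 (Or.inl rfl)
      · rintro ⟨hne, h1, h2⟩
        refine ⟨Or.inr h1, ?_⟩
        rintro (h | h)
        · exact hne (Sum.inr_injective h)
        · exact h2 h
    have hD' : Finset.univ.filter (fun a : V => Sum.inl a ∈ insert (Sum.inr j) F ∧
        Sum.inr a ∈ insert (Sum.inr j) F) = insert j D := by
      ext a
      simp only [hD, Finset.mem_filter, Finset.mem_insert, Finset.mem_univ, true_and]
      constructor
      · rintro ⟨h1 | h1, h2⟩
        · exact absurd h1 (by simp)
        · rcases h2 with h2 | h2
          · exact Or.inl (Sum.inr_injective h2)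
          · exact Or.inr ⟨h1, h2⟩
      · rintro (rfl | ⟨h1, h2⟩)
        · exact ⟨Or.inr hjl, Or.inl rfl⟩
        · exact ⟨Or.inr h1, Or.inr h2⟩
    rw [hU'] at hM''
    rw [hD'] at hMc
    have hjD : j ∉ D := by
      rw [hD, Finset.mem_filter]
      rintro ⟨-, -, h⟩
      exact hjr h
    rw [Finset.card_insert_of_notMem hjD] at hMc
    refine ⟨M'', matchingOn_mono hM'' (Finset.erase_subset _ _), ?_, by omega⟩
    intro e he hje
    have := hM''.2.1 e he j hje
    exact (Finset.mem_erase.mp this).1 rfl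
  by_cases hUne : U.Nonempty
  · obtain ⟨j, hj⟩ := hUne
    obtain ⟨M₁', h₁', hj₁, hcard₁⟩ := hUext j hj
    have hq_eq : q = D.card + t + 1 := by
      have := hle_t M₁' h₁'
      omega
    have ht0 : t = 0 := by
      by_contra ht0
      obtain ⟨M₀, hM₀, hc₀⟩ := hPt
      have hM₀ne : M₀.Nonempty := Finset.card_pos.mp (by omega)
      obtain ⟨e₀, he₀⟩ := hM₀ne
      have hexy : ∃ x y, H.Adj x y ∧ x ∈ U ∧ y ∈ U ∧ s(x, y) ∈ M₀ := by
        have h1 := hM₀.1 e₀ he₀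
        have h2 := hM₀.2.1 e₀ he₀
        revert h1 h2 he₀
        induction e₀ with
        | _ x y =>
          intro he₀ h1 h2
          exact ⟨x, y, h1, h2 x (Sym2.mem_mk_left _ _), h2 y (Sym2.mem_mk_right _ _), he₀⟩
      obtain ⟨x, y, hxy, hxU, hyU, -⟩ := hexy
      obtain ⟨Mx, hMx, hxav, hxc⟩ := hUext x hxU
      obtain ⟨My, hMy, hyav, hyc⟩ := hUext y hyU
      have hxt : Mx.card = t := le_antisymm (hle_t _ hMx) (by omega)
      have hyt : My.card = t := le_antisymm (hle_t _ hMy) (by omega)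
      exact essential_vertex hbip U t hnot Mx My hMx hMy hxt hyt x y hxy hxU hyU hxav hyav
    omega
  · have hUe : U = ∅ := Finset.not_nonempty_iff_eq_empty.mp hUne
    by_cases hA : ∀ a : V, Sum.inl a ∈ F
    · exfalso
      have hDuniv : D = Finset.univ := by
        ext a
        simp only [hD, Finset.mem_filter, Finset.mem_univ, true_and, iff_true]
        refine ⟨hA a, ?_⟩
        by_contra hr
        have haU : a ∈ U := by
          rw [hU, Finset.mem_filter]
          exact ⟨Finset.mem_univ _, hA a, hr⟩
        rw [hUe] at haU
        exact absurd haU (Finset.notMem_empty a)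
      have hDn : D.card = n := by rw [hDuniv, Finset.card_univ, hn]
      obtain ⟨Mν, hMν, hνc⟩ := hν₁
      have hνn : ν ≤ n := by
        have := whisker_matching_card_le hMν
        omega
      omega
    · push_neg at hA
      obtain ⟨j, hjl⟩ := hA
      have hjr : Sum.inr j ∈ F := (hAB j).resolve_left hjl
      obtain ⟨M, hM, hMq⟩ := hext (Sum.inl j) hjl
      obtain ⟨M'', hM'', hMc⟩ := whisker_project hM
      have hU' : Finset.univ.filter (fun a : V => Sum.inl a ∈ insert (Sum.inl j) F ∧
          Sum.inr a ∉ insert (Sum.inl j) F) = U := by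
        ext a
        simp only [hU, Finset.mem_filter, Finset.mem_insert, Finset.mem_univ, true_and]
        constructor
        · rintro ⟨h1 | h1, h2⟩
          · obtain rfl : a = j := Sum.inl_injective h1
            exact (h2 (Or.inr hjr)).elim
          · exact ⟨h1, fun hr => h2 (Or.inr hr)⟩
        · rintro ⟨h1, h2⟩
          refine ⟨Or.inr h1, ?_⟩
          rintro (h | h)
          · exact Sum.inr_ne_inl h
          · exact h2 h
      have hD' : Finset.univ.filter (fun a : V => Sum.inl a ∈ insert (Sum.inl j) F ∧
          Sum.inr a ∈ insert (Sum.inl j) F) = insert j D := by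
        ext a
        simp only [hD, Finset.mem_filter, Finset.mem_insert, Finset.mem_univ, true_and]
        constructor
        · rintro ⟨h1 | h1, h2 | h2⟩
          · exact absurd h2 (by simp)
          · exact Or.inl (Sum.inl_injective h1)
          · exact absurd h2 (by simp)
          · exact Or.inr ⟨h1, h2⟩
        · rintro (rfl | ⟨h1, h2⟩)
          · exact ⟨Or.inl rfl, Or.inr hjr⟩
          · exact ⟨Or.inr h1, Or.inr h2⟩
      rw [hU', hUe] at hM''
      rw [hD'] at hMc
      have hjD : j ∉ D := by
        rw [hD, Finset.mem_filter]
        rintro ⟨-, h, -⟩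
        exact hjl h
      rw [Finset.card_insert_of_notMem hjD] at hMc
      have hM''0 : M''.card = 0 := by
        rcases Finset.eq_empty_or_nonempty M'' with h0 | ⟨e, he⟩
        · simp [h0]
        · exact absurd (hM''.2.1 e he _ (Sym2.out_fst_mem e)) (Finset.notMem_empty _)
      omega
end

section
/- Let H be a graph on n vertices containing an odd cycle, with ℓ the length of a shortest odd cycle of H, and let G = W(H). If ⌈ℓ/2⌉ ≤ q ≤ n − ⌊ℓ/2⌋, then MF^q(G) is not pure: it has facets of cardinality n + q − 1 and also a facet of cardinality at most n + q − 2. -/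
variable {V : Type*}

section Aux

open SimpleGraph

lemma getVert_eq_support_getElem {W : Type*} {G : SimpleGraph W} {u v : W} (w : G.Walk u v) :
    ∀ i, (hi : i ≤ w.length) → w.getVert i =
      w.support[i]'(by simp [SimpleGraph.Walk.length_support]; omega) := by
  induction w with
  | nil =>
    intro i hi
    simp only [SimpleGraph.Walk.length_nil, Nat.le_zero] at hi
    subst hi; simp
  | cons h p ih =>
    intro i hi
    cases i with
    | zero => simp
    | succ k =>
      simp only [SimpleGraph.Walk.getVert_cons_succ, SimpleGraph.Walk.support_cons]
      rw [ih k (by simpa using hi)]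
      simp

lemma cycle_getVert_inj {W : Type*} {G : SimpleGraph W} {v : W} {w : G.Walk v v}
    (hw : w.IsCycle) {i j : ℕ} (hi : i < w.length) (hj : j < w.length)
    (h : w.getVert i = w.getVert j) : i = j := by
  have hlen : w.support.length = w.length + 1 := SimpleGraph.Walk.length_support w
  have htail : w.support.tail.length = w.length := by simp [hlen]
  have aux : ∀ a b : ℕ, 1 ≤ a → a ≤ w.length → 1 ≤ b → b ≤ w.length →
      w.getVert a = w.getVert b → a = b := by
    intro a b ha1 ha2 hb1 hb2 hab
    have hga : w.getVert a = w.support.tail[a-1]'(by omega) := by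
      rw [getVert_eq_support_getElem w a ha2]
      rw [List.getElem_tail]
      congr 1; omega
    have hgb : w.getVert b = w.support.tail[b-1]'(by omega) := by
      rw [getVert_eq_support_getElem w b hb2]
      rw [List.getElem_tail]
      congr 1; omega
    have key : a - 1 = b - 1 := by
      rw [hga, hgb] at hab
      exact (List.Nodup.getElem_inj_iff hw.support_nodup).mp hab
    omega
  have h0 : w.getVert w.length = w.getVert 0 := by simp
  rcases Nat.eq_zero_or_pos i with rfl | hi1
  · rcases Nat.eq_zero_or_pos j with rfl | hj1
    · rfl
    · have := aux w.length j (by have := hw.three_le_length; omega) le_rfl hj1 (le_of_lt hj)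
        (by rw [h0]; exact h)
      omega
  · rcases Nat.eq_zero_or_pos j with rfl | hj1
    · have := aux i w.length hi1 (le_of_lt hi) (by have := hw.three_le_length; omega) le_rfl
        (by rw [h0]; exact h)
      omega
    · exact aux i j hi1 (le_of_lt hi) hj1 (le_of_lt hj) h

lemma cyc_adj_mod {W : Type*} {G : SimpleGraph W} {v : W} (w : G.Walk v v)
    (hpos : 0 < w.length) (a : ℕ) :
    G.Adj (w.getVert (a % w.length)) (w.getVert ((a + 1) % w.length)) := by
  set ℓ := w.length with hℓ
  have hr : a % ℓ < ℓ := Nat.mod_lt _ hpos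
  have hmod : (a + 1) % ℓ = (a % ℓ + 1) % ℓ := by
    conv_lhs => rw [Nat.add_mod]
    rw [Nat.add_mod (a % ℓ) 1, Nat.mod_mod_of_dvd _ dvd_rfl]
  by_cases hcase : a % ℓ + 1 < ℓ
  · rw [hmod, Nat.mod_eq_of_lt hcase]
    exact w.adj_getVert_succ hr
  · have h1 : a % ℓ + 1 = ℓ := by omega
    have h2 : (a + 1) % ℓ = 0 := by rw [hmod, h1, Nat.mod_self]
    rw [h2]
    have h3 := w.adj_getVert_succ hr
    rw [h1] at h3
    rw [show w.getVert 0 = v from w.getVert_zero]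
    rw [show w.getVert ℓ = v from w.getVert_length] at h3
    exact h3

lemma card_le_of_inl_endpoint {V : Type*} [DecidableEq V] (v0 : V) (S : Finset V)
    (M : Finset (Sym2 (V ⊕ V)))
    (hdisj : ∀ e ∈ M, ∀ e' ∈ M, e ≠ e' → ∀ z ∈ e, z ∉ e')
    (hsel : ∀ e ∈ M, ∃ a, a ∈ S ∧ (Sum.inl a : V ⊕ V) ∈ e) :
    M.card ≤ S.card := by
  classical
  set f : Sym2 (V ⊕ V) → V :=
    fun e => if h : ∃ a, a ∈ S ∧ (Sum.inl a : V ⊕ V) ∈ e then h.choose else v0 with hf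
  have hfspec : ∀ e ∈ M, f e ∈ S ∧ (Sum.inl (f e) : V ⊕ V) ∈ e := by
    intro e he
    have h := hsel e he
    simp only [hf, dif_pos h]
    exact h.choose_spec
  apply Finset.card_le_card_of_injOn f (fun e he => (hfspec e he).1)
  intro e he e' he' hfe
  by_contra hne
  exact hdisj e he e' he' hne _ (hfspec e he).2 (hfe ▸ (hfspec e' he').2)

variable {V : Type*} [DecidableEq V]

/-- General construction of a matching consisting of whisker edges over `T`
and `t` edges along a path `c 0, c 1, …, c (2t-1)` in `H`. -/
lemma exists_matching_construction (H : SimpleGraph V) (F' : Finset (V ⊕ V))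
    (T : Finset V) (t : ℕ) (c : ℕ → V)
    (hT : ∀ a ∈ T, (Sum.inl a : V ⊕ V) ∈ F' ∧ (Sum.inr a : V ⊕ V) ∈ F')
    (hadj : ∀ m, m + 1 < 2 * t → H.Adj (c m) (c (m + 1)))
    (hcinj : ∀ m m', m < 2 * t → m' < 2 * t → c m = c m' → m = m')
    (hcF : ∀ m, m < 2 * t → (Sum.inl (c m) : V ⊕ V) ∈ F')
    (hcross : ∀ a ∈ T, ∀ m, m < 2 * t → c m ≠ a) :
    ∃ M : Finset (Sym2 (V ⊕ V)), IsMatchingOn (whisker H) F' M ∧ M.card = T.card + t := by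
  classical
  set WM : Finset (Sym2 (V ⊕ V)) :=
    T.image (fun a => s(Sum.inl a, Sum.inr a)) with hWM
  set CM : Finset (Sym2 (V ⊕ V)) :=
    (Finset.range t).image (fun i => s(Sum.inl (c (2*i)), Sum.inl (c (2*i+1)))) with hCM
  refine ⟨WM ∪ CM, ⟨?_, ?_, ?_⟩, ?_⟩
  · -- edges
    intro e he
    rcases Finset.mem_union.mp he with he | he
    · obtain ⟨a, _, rfl⟩ := Finset.mem_image.mp he
      exact (SimpleGraph.mem_edgeSet (whisker H)).mpr (Or.inr ⟨a, Or.inl ⟨rfl, rfl⟩⟩)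
    · obtain ⟨i, hi, rfl⟩ := Finset.mem_image.mp he
      refine (SimpleGraph.mem_edgeSet (whisker H)).mpr (Or.inl ⟨_, _, rfl, rfl, ?_⟩)
      exact hadj (2*i) (by simp only [Finset.mem_range] at hi; omega)
  · -- endpoints in F'
    intro e he z hz
    rcases Finset.mem_union.mp he with he | he
    · obtain ⟨a, ha, rfl⟩ := Finset.mem_image.mp he
      rcases Sym2.mem_iff.mp hz with rfl | rfl
      · exact (hT a ha).1
      · exact (hT a ha).2
    · obtain ⟨i, hi, rfl⟩ := Finset.mem_image.mp he
      simp only [Finset.mem_range] at hi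
      rcases Sym2.mem_iff.mp hz with rfl | rfl
      · exact hcF _ (by omega)
      · exact hcF _ (by omega)
  · -- pairwise disjoint
    intro e he e' he' hne z hz hz'
    rcases Finset.mem_union.mp he with he | he <;>
      rcases Finset.mem_union.mp he' with he' | he'
    · obtain ⟨a, ha, rfl⟩ := Finset.mem_image.mp he
      obtain ⟨b, hb, rfl⟩ := Finset.mem_image.mp he'
      rcases Sym2.mem_iff.mp hz with rfl | rfl <;>
        rcases Sym2.mem_iff.mp hz' with h | h <;> simp_all
    · obtain ⟨a, ha, rfl⟩ := Finset.mem_image.mp he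
      obtain ⟨i, hi, rfl⟩ := Finset.mem_image.mp he'
      simp only [Finset.mem_range] at hi
      rcases Sym2.mem_iff.mp hz with rfl | rfl <;>
        rcases Sym2.mem_iff.mp hz' with h | h
      · exact hcross a ha (2*i) (by omega) (Sum.inl_injective h.symm)
      · exact hcross a ha (2*i+1) (by omega) (Sum.inl_injective h.symm)
      · exact Sum.inr_ne_inl h
      · exact Sum.inr_ne_inl h
    · obtain ⟨i, hi, rfl⟩ := Finset.mem_image.mp he
      obtain ⟨a, ha, rfl⟩ := Finset.mem_image.mp he'
      simp only [Finset.mem_range] at hi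
      rcases Sym2.mem_iff.mp hz with rfl | rfl <;>
        rcases Sym2.mem_iff.mp hz' with h | h
      · exact hcross a ha (2*i) (by omega) (Sum.inl_injective h)
      · exact Sum.inl_ne_inr h
      · exact hcross a ha (2*i+1) (by omega) (Sum.inl_injective h)
      · exact Sum.inl_ne_inr h
    · obtain ⟨i, hi, rfl⟩ := Finset.mem_image.mp he
      obtain ⟨i', hi', rfl⟩ := Finset.mem_image.mp he'
      simp only [Finset.mem_range] at hi hi'
      have hii' : i ≠ i' := by rintro rfl; exact hne rfl
      rcases Sym2.mem_iff.mp hz with rfl | rfl <;>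
        rcases Sym2.mem_iff.mp hz' with h | h
      · have := hcinj _ _ (by omega : 2*i < 2*t) (by omega) (Sum.inl_injective h); omega
      · have := hcinj _ _ (by omega : 2*i < 2*t) (by omega) (Sum.inl_injective h); omega
      · have := hcinj _ _ (by omega : 2*i+1 < 2*t) (by omega) (Sum.inl_injective h); omega
      · have := hcinj _ _ (by omega : 2*i+1 < 2*t) (by omega) (Sum.inl_injective h); omega
  · -- cardinality
    have hWMcard : WM.card = T.card := by
      apply Finset.card_image_of_injOn
      intro a _ b _ hab
      rcases Sym2.eq_iff.mp hab with ⟨h1, _⟩ | ⟨h1, _⟩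
      · exact Sum.inl_injective h1
      · exact absurd h1 Sum.inl_ne_inr
    have hCMcard : CM.card = t := by
      rw [Finset.card_image_of_injOn, Finset.card_range]
      intro i hi i' hi' hii'
      simp only [Finset.mem_coe, Finset.mem_range] at hi hi'
      rcases Sym2.eq_iff.mp hii' with ⟨h1, _⟩ | ⟨h1, h2⟩
      · have := hcinj _ _ (by omega : 2*i < 2*t) (by omega) (Sum.inl_injective h1); omega
      · have := hcinj _ _ (by omega : 2*i < 2*t) (by omega) (Sum.inl_injective h1)
        omega
    rw [Finset.card_union_of_disjoint, hWMcard, hCMcard]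
    rw [Finset.disjoint_left]
    intro e he he'
    obtain ⟨a, _, rfl⟩ := Finset.mem_image.mp he
    obtain ⟨i, _, heq⟩ := Finset.mem_image.mp he'
    rcases Sym2.eq_iff.mp heq with ⟨_, h2⟩ | ⟨h1, _⟩
    · exact Sum.inr_ne_inl h2.symm
    · exact Sum.inr_ne_inl h1.symm

end Aux


/-- if `H` contains an odd cycle, `ℓ` is the length of a shortest odd
cycle, and `⌈ℓ/2⌉ ≤ q ≤ n - ⌊ℓ/2⌋`, then `MF^q(W(H))` is not pure: it has a facet
of cardinality `n + q - 1` and a facet of cardinality at most `n + q - 2`. -/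
theorem mfComplex_not_pure_of_oddCycle
    {V : Type*} [Fintype V] [DecidableEq V] (H : SimpleGraph V)
    (n : ℕ) (hn : Fintype.card V = n) (ℓ : ℕ) (hodd : Odd ℓ)
    (hcyc : ∃ (v : V) (w : H.Walk v v), w.IsCycle ∧ w.length = ℓ)
    (hmin : ∀ (v : V) (w : H.Walk v v), w.IsCycle → Odd w.length → ℓ ≤ w.length)
    (q : ℕ) (h1 : (ℓ + 1) / 2 ≤ q) (h2 : q ≤ n - ℓ / 2) :
    (∃ F : Finset (V ⊕ V), IsFacet (MFFace (whisker H) q) F ∧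
      F.card = n + q - 1) ∧
    (∃ F : Finset (V ⊕ V), IsFacet (MFFace (whisker H) q) F ∧
      F.card ≤ n + q - 2) := by
  classical
  obtain ⟨v, w, hw, hlen⟩ := hcyc
  obtain ⟨t, ht⟩ := hodd
  have hl3 : 3 ≤ ℓ := hlen ▸ hw.three_le_length
  have hpos : 0 < w.length := by omega
  have ht1 : 1 ≤ t := by omega
  have hq1 : t + 1 ≤ q := by omega
  -- the cycle vertex set
  set C : Finset V := (Finset.range ℓ).image (fun i => w.getVert i) with hC
  have hgetmem : ∀ k, k < ℓ → w.getVert k ∈ C := fun k hk =>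
    Finset.mem_image.mpr ⟨k, Finset.mem_range.mpr hk, rfl⟩
  have hCmem : ∀ x, x ∈ C → ∃ k, k < ℓ ∧ w.getVert k = x := by
    intro x hx
    obtain ⟨k, hk, rfl⟩ := Finset.mem_image.mp hx
    exact ⟨k, Finset.mem_range.mp hk, rfl⟩
  have hCcard : C.card = ℓ := by
    rw [hC, Finset.card_image_of_injOn, Finset.card_range]
    intro i hi j hj hij
    simp only [Finset.mem_coe, Finset.mem_range] at hi hj
    exact cycle_getVert_inj hw (by omega) (by omega) hij
  have hnl : ℓ ≤ n := by
    have := Finset.card_le_card (Finset.subset_univ C)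
    rwa [hCcard, Finset.card_univ, hn] at this
  have hqn : q + t ≤ n := by omega
  -- disjointness of inl / inr images
  have hdisjlr : ∀ (A B : Finset V),
      Disjoint (A.image (Sum.inl : V → V ⊕ V)) (B.image Sum.inr) := by
    intro A B
    rw [Finset.disjoint_left]
    intro z hz hz'
    obtain ⟨a, _, rfl⟩ := Finset.mem_image.mp hz
    obtain ⟨b, _, hb⟩ := Finset.mem_image.mp hz'
    exact Sum.inr_ne_inl hb
  constructor
  · -- ===== the big facet =====
    obtain ⟨S₁, -, hS₁card⟩ := Finset.exists_subset_card_eq (s := (Finset.univ : Finset V)) (n := q - 1)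
      (by rw [Finset.card_univ, hn]; omega)
    set F₁ : Finset (V ⊕ V) := S₁.image Sum.inl ∪ (Finset.univ : Finset V).image Sum.inr
      with hF₁
    have hmeminl : ∀ a : V, (Sum.inl a : V ⊕ V) ∈ F₁ ↔ a ∈ S₁ := by
      intro a; simp [hF₁]
    have hmeminr : ∀ a : V, (Sum.inr a : V ⊕ V) ∈ F₁ := by
      intro a; simp [hF₁]
    refine ⟨F₁, ⟨?_, ?_⟩, ?_⟩
    · -- F₁ is a face
      rintro ⟨M, ⟨hedg, hmem, hdisj⟩, hcard⟩
      have hsel : ∀ e ∈ M, ∃ a, a ∈ S₁ ∧ (Sum.inl a : V ⊕ V) ∈ e := by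
        intro e he
        induction e using Sym2.ind with
        | _ x y =>
          have hadj := (SimpleGraph.mem_edgeSet (whisker H)).mp (hedg _ he)
          rcases hadj with ⟨a, b, rfl, rfl, hab⟩ | ⟨a, ⟨rfl, rfl⟩ | ⟨rfl, rfl⟩⟩
          · exact ⟨a, (hmeminl a).mp (hmem _ he _ (by simp)), by simp⟩
          · exact ⟨a, (hmeminl a).mp (hmem _ he _ (by simp)), by simp⟩
          · exact ⟨a, (hmeminl a).mp (hmem _ he _ (by simp)), by simp⟩
      have := card_le_of_inl_endpoint v S₁ M hdisj hsel
      omega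
    · -- F₁ is maximal
      intro F' hF' hsub
      refine Finset.Subset.antisymm hsub ?_
      intro z hz
      by_contra hzF
      obtain x | x := z
      · have hxS : x ∉ S₁ := fun h => hzF ((hmeminl x).mpr h)
        apply hF'
        obtain ⟨M, hM, hMcard⟩ := exists_matching_construction H F' (insert x S₁) 0
          (fun _ => v)
          (by
            intro a ha
            rcases Finset.mem_insert.mp ha with rfl | ha
            · exact ⟨hz, hsub (hmeminr a)⟩
            · exact ⟨hsub ((hmeminl a).mpr ha), hsub (hmeminr a)⟩)
          (fun m hm => absurd hm (by omega))
          (fun m m' hm _ _ => absurd hm (by omega))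
          (fun m hm => absurd hm (by omega))
          (fun a _ m hm => absurd hm (by omega))
        refine ⟨M, hM, ?_⟩
        rw [hMcard, Finset.card_insert_of_notMem hxS, hS₁card]
        omega
      · exact hzF (hmeminr x)
    · -- cardinality of F₁
      rw [hF₁, Finset.card_union_of_disjoint (hdisjlr _ _),
        Finset.card_image_of_injective _ Sum.inl_injective,
        Finset.card_image_of_injective _ Sum.inr_injective,
        hS₁card, Finset.card_univ, hn]
      omega
  · -- ===== the small facet =====
    obtain ⟨S, hSsub, hScard⟩ := Finset.exists_subset_card_eq (s := Finset.univ \ C) (n := q - 1 - t)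
      (by rw [Finset.card_sdiff_of_subset (Finset.subset_univ C), Finset.card_univ, hn, hCcard]; omega)
    have hSC : ∀ a ∈ S, a ∉ C := by
      intro a ha
      have := hSsub ha
      simp only [Finset.mem_sdiff] at this
      exact this.2
    set F₂ : Finset (V ⊕ V) := (C ∪ S).image Sum.inl ∪ (Finset.univ \ C).image Sum.inr
      with hF₂
    have hmeminl : ∀ a : V, (Sum.inl a : V ⊕ V) ∈ F₂ ↔ a ∈ C ∨ a ∈ S := by
      intro a; simp [hF₂]
    have hmeminr : ∀ a : V, (Sum.inr a : V ⊕ V) ∈ F₂ ↔ a ∉ C := by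
      intro a; simp [hF₂]
    refine ⟨F₂, ⟨?_, ?_⟩, ?_⟩
    · -- F₂ is a face
      rintro ⟨M, ⟨hedg, hmem, hdisj⟩, hcard⟩
      set P : Sym2 (V ⊕ V) → Prop := fun e => ∃ a, a ∈ S ∧ (Sum.inl a : V ⊕ V) ∈ e with hP
      set MS : Finset (Sym2 (V ⊕ V)) := M.filter P with hMS
      set MC : Finset (Sym2 (V ⊕ V)) := M.filter (fun e => ¬ P e) with hMC
      have hMSsub : MS ⊆ M := Finset.filter_subset _ _
      have hMCsub : MC ⊆ M := Finset.filter_subset _ _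
      have hMScard : MS.card ≤ q - 1 - t := by
        rw [← hScard]
        exact card_le_of_inl_endpoint v S MS
          (fun e he e' he' => hdisj e (hMSsub he) e' (hMSsub he'))
          (fun e he => (Finset.mem_filter.mp he).2)
      -- each edge of MC has two distinct endpoints on the cycle
      have hMCsel : ∀ e ∈ MC, ∃ a b, a ∈ C ∧ b ∈ C ∧ a ≠ b ∧
          (Sum.inl a : V ⊕ V) ∈ e ∧ (Sum.inl b : V ⊕ V) ∈ e := by
        intro e he
        obtain ⟨heM, hnP⟩ := Finset.mem_filter.mp he
        induction e using Sym2.ind with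
        | _ x y =>
          have hadj := (SimpleGraph.mem_edgeSet (whisker H)).mp (hedg _ heM)
          rcases hadj with ⟨a, b, rfl, rfl, hab⟩ | ⟨a, ⟨rfl, rfl⟩ | ⟨rfl, rfl⟩⟩
          · have haC : a ∈ C := by
              rcases (hmeminl a).mp (hmem _ heM _ (by simp)) with h | h
              · exact h
              · exact absurd ⟨a, h, by simp⟩ hnP
            have hbC : b ∈ C := by
              rcases (hmeminl b).mp (hmem _ heM _ (by simp)) with h | h
              · exact h
              · exact absurd ⟨b, h, by simp⟩ hnP
            exact ⟨a, b, haC, hbC, hab.ne, by simp, by simp⟩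
          · exfalso
            have h1 := (hmeminl a).mp (hmem _ heM _ (by simp))
            have h2 := (hmeminr a).mp (hmem _ heM _ (by simp))
            rcases h1 with h | h
            · exact h2 h
            · exact hnP ⟨a, h, by simp⟩
          · exfalso
            have h1 := (hmeminl a).mp (hmem _ heM _ (by simp))
            have h2 := (hmeminr a).mp (hmem _ heM _ (by simp))
            rcases h1 with h | h
            · exact h2 h
            · exact hnP ⟨a, h, by simp⟩
      -- 2 * |MC| ≤ ℓ
      set g : Sym2 (V ⊕ V) → Finset V := fun e => C.filter (fun a => (Sum.inl a : V ⊕ V) ∈ e)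
        with hg
      have hgdisj : ∀ e ∈ MC, ∀ e' ∈ MC, e ≠ e' → Disjoint (g e) (g e') := by
        intro e he e' he' hne
        rw [Finset.disjoint_left]
        intro a ha ha'
        exact hdisj e (hMCsub he) e' (hMCsub he') hne _ (Finset.mem_filter.mp ha).2
          (Finset.mem_filter.mp ha').2
      have hbUcard : (MC.biUnion g).card = ∑ e ∈ MC, (g e).card :=
        Finset.card_biUnion hgdisj
      have hbUle : (MC.biUnion g).card ≤ ℓ := by
        rw [← hCcard]
        exact Finset.card_le_card (Finset.biUnion_subset.mpr
          (fun e _ => Finset.filter_subset _ _))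
      have hglow : ∀ e ∈ MC, 2 ≤ (g e).card := by
        intro e he
        obtain ⟨a, b, haC, hbC, hab, hae, hbe⟩ := hMCsel e he
        have hsub2 : ({a, b} : Finset V) ⊆ g e := by
          intro x hx
          rcases Finset.mem_insert.mp hx with rfl | hx
          · exact Finset.mem_filter.mpr ⟨haC, hae⟩
          · rw [Finset.mem_singleton.mp hx]
            exact Finset.mem_filter.mpr ⟨hbC, hbe⟩
        calc 2 = ({a, b} : Finset V).card := (Finset.card_pair hab).symm
          _ ≤ (g e).card := Finset.card_le_card hsub2
      have hsum : MC.card * 2 ≤ ∑ e ∈ MC, (g e).card := by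
        simpa using Finset.card_nsmul_le_sum MC (fun e => (g e).card) 2 hglow
      have hMCcard : MC.card ≤ t := by omega
      have hsplit : MS.card + MC.card = M.card :=
        Finset.card_filter_add_card_filter_not (p := P)
      omega
    · -- F₂ is maximal
      intro F' hF' hsub
      refine Finset.Subset.antisymm hsub ?_
      intro z hz
      by_contra hzF
      -- main engine: for any j < ℓ and suitable x, we obtain a q-matching in F'
      have main : ∀ j, j < ℓ → ∀ x : V,
          (Sum.inl x : V ⊕ V) ∈ F' → (Sum.inr x : V ⊕ V) ∈ F' → x ∉ S →
          (x ∉ C ∨ x = w.getVert j) → False := by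
        intro j hj x hxl hxr hxS hxC
        set c : ℕ → V := fun m => w.getVert ((j + 1 + m) % w.length) with hc
        have hcmem : ∀ m, c m ∈ C := by
          intro m
          exact hgetmem _ (by rw [← hlen]; exact Nat.mod_lt _ hpos)
        have hcinj : ∀ m m', m < 2 * t → m' < 2 * t → c m = c m' → m = m' := by
          intro m m' hm hm' hcc
          have hmod : (j + 1 + m) % w.length = (j + 1 + m') % w.length :=
            cycle_getVert_inj hw (Nat.mod_lt _ hpos) (Nat.mod_lt _ hpos) hcc
          have h2 : m ≡ m' [MOD w.length] := Nat.ModEq.add_left_cancel' (j + 1) hmod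
          have := h2.eq_of_lt_of_lt (by omega) (by omega)
          exact this
        have hcne : ∀ m, m < 2 * t → c m ≠ w.getVert j := by
          intro m hm hcc
          have hmod : (j + 1 + m) % w.length = j % w.length := by
            rw [Nat.mod_eq_of_lt (by omega : j < w.length)]
            exact cycle_getVert_inj hw (Nat.mod_lt _ hpos) (by omega) hcc
          have h2 : 1 + m ≡ 0 [MOD w.length] := by
            have : j + (1 + m) ≡ j + 0 [MOD w.length] := by
              simpa [← Nat.add_assoc, Nat.ModEq] using hmod
            exact Nat.ModEq.add_left_cancel' j this
          have := h2.eq_of_lt_of_lt (by omega) (by omega)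
          omega
        apply hF'
        obtain ⟨M, hM, hMcard⟩ := exists_matching_construction H F' (insert x S) t c
          (by
            intro a ha
            rcases Finset.mem_insert.mp ha with rfl | ha
            · exact ⟨hxl, hxr⟩
            · exact ⟨hsub ((hmeminl a).mpr (Or.inr ha)),
                hsub ((hmeminr a).mpr (hSC a ha))⟩)
          (by
            intro m hm
            have := cyc_adj_mod w hpos (j + 1 + m)
            rwa [show j + 1 + m + 1 = j + 1 + (m + 1) by omega] at this)
          hcinj
          (fun m _ => hsub ((hmeminl (c m)).mpr (Or.inl (hcmem m))))
          (by
            intro a ha m hm hcc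
            rcases Finset.mem_insert.mp ha with rfl | ha
            · rcases hxC with h | rfl
              · exact h (hcc ▸ hcmem m)
              · exact hcne m hm hcc
            · exact hSC a ha (hcc ▸ hcmem m))
        refine ⟨M, hM, ?_⟩
        rw [hMcard, Finset.card_insert_of_notMem hxS, hScard]
        omega
      obtain x | x := z
      · have hx : x ∉ C ∧ x ∉ S := by
          have := fun h => hzF ((hmeminl x).mpr h)
          exact ⟨fun h => this (Or.inl h), fun h => this (Or.inr h)⟩
        exact main 0 (by omega) x hz (hsub ((hmeminr x).mpr hx.1)) hx.2 (Or.inl hx.1)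
      · have hxC : x ∈ C := by
          by_contra h
          exact hzF ((hmeminr x).mpr h)
        obtain ⟨j, hj, hjx⟩ := hCmem x hxC
        exact main j hj x (hsub ((hmeminl x).mpr (Or.inl hxC))) hz
          (fun h => hSC x h hxC) (Or.inr hjx.symm)
    · -- cardinality of F₂
      have hCS : Disjoint C S := by
        rw [Finset.disjoint_right]
        exact hSC
      rw [hF₂, Finset.card_union_of_disjoint (hdisjlr _ _),
        Finset.card_image_of_injective _ Sum.inl_injective,
        Finset.card_image_of_injective _ Sum.inr_injective,
        Finset.card_union_of_disjoint hCS,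
        Finset.card_sdiff_of_subset (Finset.subset_univ C), Finset.card_univ, hn, hCcard, hScard]
      omega
end
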